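/- Fix a natural number N ≥ 1 and let h(t) = t² · ∏_{j=1}^N (log^{(j)}(t))² for all t large enough that every iterated logarithm log^{(j)}(√t) (1 ≤ j ≤ N) is positive. Then t·h(√t)/h(t) = ∏_{j=1}^N (log^{(j)}(√t)/log^{(j)}(t))² for such t, this quotient converges to 1/4 as t → +∞, and in particular limsup_{t→+∞} t·h(√t)/h(t) < +∞. -/

import Mathlib

open Filter

/-- Iterated logarithm: `iterLog 0 = id`, `iterLog (j+1) = log ∘ iterLog j`,
so that `iterLog j` for `j ≥ 1` is the `j`-th iterated logarithm `log^{(j)}`. -/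
noncomputable def iterLog : ℕ → ℝ → ℝ
  | 0, t => t
  | j + 1, t => Real.log (iterLog j t)

lemma sqrt_tendsto_atTop : Tendsto Real.sqrt atTop atTop := by
  refine tendsto_atTop_atTop.2 fun b => ⟨max (b ^ 2) 0, fun t ht => ?_⟩
  calc b ≤ |b| := le_abs_self b
    _ = Real.sqrt (b ^ 2) := (Real.sqrt_sq_eq_abs b).symm
    _ ≤ Real.sqrt t := Real.sqrt_le_sqrt (le_trans (le_max_left _ _) ht)

lemma iterLog_tendsto (j : ℕ) : Tendsto (iterLog j) atTop atTop := by
  induction j with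
  | zero => exact tendsto_id
  | succ j ih => exact Real.tendsto_log_atTop.comp ih

/-- The limit of each individual ratio. -/
lemma ratio_tendsto : ∀ j : ℕ, 1 ≤ j →
    Tendsto (fun t : ℝ => iterLog j (Real.sqrt t) / iterLog j t) atTop
      (nhds (if j = 1 then 1 / 2 else 1)) := by
  refine Nat.le_induction ?_ ?_
  · -- base case j = 1
    have heq : ∀ᶠ t : ℝ in atTop,
        (1 : ℝ) / 2 = iterLog 1 (Real.sqrt t) / iterLog 1 t := by
      filter_upwards [eventually_gt_atTop (1 : ℝ)] with t ht
      have ht0 : (0 : ℝ) ≤ t := by linarith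
      have hlog : Real.log t ≠ 0 := by
        have := Real.log_pos ht
        linarith
      simp only [iterLog, Real.log_sqrt ht0]
      field_simp
    have : Tendsto (fun t : ℝ => iterLog 1 (Real.sqrt t) / iterLog 1 t) atTop
        (nhds (1 / 2)) := tendsto_const_nhds.congr' heq
    simpa using this
  · -- inductive step
    intro j hj ih
    have hj1 : j + 1 ≠ 1 := by omega
    simp only [if_neg hj1]
    set r : ℝ := if j = 1 then 1 / 2 else 1 with hr
    have hrpos : 0 < r := by
      rw [hr]; split <;> norm_num
    -- eventual positivity
    have hA : ∀ᶠ t : ℝ in atTop, 0 < iterLog j (Real.sqrt t) :=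
      ((iterLog_tendsto j).comp sqrt_tendsto_atTop).eventually_gt_atTop 0
    have hB : ∀ᶠ t : ℝ in atTop, 0 < iterLog j t :=
      (iterLog_tendsto j).eventually_gt_atTop 0
    have hC : ∀ᶠ t : ℝ in atTop, 0 < iterLog (j + 1) t :=
      (iterLog_tendsto (j + 1)).eventually_gt_atTop 0
    have heq : ∀ᶠ t : ℝ in atTop,
        Real.log (iterLog j (Real.sqrt t) / iterLog j t) / iterLog (j + 1) t + 1
          = iterLog (j + 1) (Real.sqrt t) / iterLog (j + 1) t := by
      filter_upwards [hA, hB, hC] with t ha hb hc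
      have : iterLog (j + 1) (Real.sqrt t)
          = Real.log (iterLog j (Real.sqrt t) / iterLog j t) + iterLog (j + 1) t := by
        show Real.log _ = _ + Real.log _
        rw [Real.log_div ha.ne' hb.ne']
        ring
      rw [this]
      field_simp
    have hlim : Tendsto
        (fun t : ℝ => Real.log (iterLog j (Real.sqrt t) / iterLog j t) / iterLog (j + 1) t + 1)
        atTop (nhds 1) := by
      have h1 : Tendsto (fun t : ℝ => Real.log (iterLog j (Real.sqrt t) / iterLog j t))
          atTop (nhds (Real.log r)) :=
        ((Real.continuousAt_log hrpos.ne').tendsto).comp ih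
      have h2 := h1.div_atTop (iterLog_tendsto (j + 1))
      simpa using h2.add tendsto_const_nhds
    exact hlim.congr' heq

/-- for `h(t) = t²·∏_{j=1}^N (log^{(j)}(t))²` one has
`t·h(√t)/h(t) = ∏_{j=1}^N (log^{(j)}(√t)/log^{(j)}(t))²` whenever every
`log^{(j)}(√t)` (`1 ≤ j ≤ N`) is positive, this quotient tends to `1/4` as
`t → +∞`, and in particular `limsup_{t→+∞} t·h(√t)/h(t) < +∞`. -/
theorem iterLog_h_quotient (N : ℕ) (hN : 1 ≤ N)
    (h : ℝ → ℝ)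
    (hdef : ∀ t : ℝ, h t = t ^ 2 * ∏ j ∈ Finset.Icc 1 N, (iterLog j t) ^ 2) :
    (∀ t : ℝ, (∀ j : ℕ, 1 ≤ j → j ≤ N → 0 < iterLog j (Real.sqrt t)) →
        t * h (Real.sqrt t) / h t
          = ∏ j ∈ Finset.Icc 1 N, (iterLog j (Real.sqrt t) / iterLog j t) ^ 2) ∧
    Tendsto (fun t : ℝ => t * h (Real.sqrt t) / h t) atTop (nhds (1 / 4)) ∧
    Filter.limsup (fun t : ℝ => ((t * h (Real.sqrt t) / h t : ℝ) : EReal)) atTop < ⊤ := by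
  -- Part 1
  have part1 : ∀ t : ℝ, (∀ j : ℕ, 1 ≤ j → j ≤ N → 0 < iterLog j (Real.sqrt t)) →
      t * h (Real.sqrt t) / h t
        = ∏ j ∈ Finset.Icc 1 N, (iterLog j (Real.sqrt t) / iterLog j t) ^ 2 := by
    intro t hpos
    have h1 : 0 < Real.log (Real.sqrt t) := hpos 1 le_rfl hN
    have hst1 : 1 < Real.sqrt t := by
      by_contra hle
      push_neg at hle
      have : Real.log (Real.sqrt t) ≤ 0 := Real.log_nonpos (Real.sqrt_nonneg t) hle
      linarith
    have ht0 : 0 ≤ t := by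
      by_contra hlt
      push_neg at hlt
      rw [Real.sqrt_eq_zero_of_nonpos hlt.le] at hst1
      linarith
    have ht1 : 1 < t := by
      have := Real.sq_sqrt ht0
      nlinarith [hst1]
    -- iterLog j t ≥ iterLog j √t > 0 for 1 ≤ j ≤ N
    have key : ∀ j : ℕ, 1 ≤ j → j ≤ N →
        iterLog j (Real.sqrt t) ≤ iterLog j t := by
      intro j hj
      induction j with
      | zero => omega
      | succ j ihj =>
        intro hjN
        rcases Nat.eq_or_lt_of_le hj with hj1 | hj1
        · -- j + 1 = 1, i.e. j = 0
          have hj0 : j = 0 := by omega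
          subst hj0
          show Real.log (Real.sqrt t) ≤ Real.log t
          rw [Real.log_sqrt ht0]
          have := Real.log_pos ht1
          linarith
        · have hj' : 1 ≤ j := by omega
          have hle := ihj hj' (by omega)
          have hposj := hpos j hj' (by omega)
          exact Real.log_le_log hposj hle
    have hpos' : ∀ j ∈ Finset.Icc 1 N, 0 < iterLog j t := by
      intro j hjmem
      rw [Finset.mem_Icc] at hjmem
      exact lt_of_lt_of_le (hpos j hjmem.1 hjmem.2) (key j hjmem.1 hjmem.2)
    have hBne : (∏ j ∈ Finset.Icc 1 N, (iterLog j t) ^ 2) ≠ 0 :=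
      Finset.prod_ne_zero_iff.2 fun j hj => pow_ne_zero 2 (hpos' j hj).ne'
    have htne : t ≠ 0 := by linarith
    rw [hdef, hdef, Real.sq_sqrt ht0]
    rw [show (∏ j ∈ Finset.Icc 1 N, (iterLog j (Real.sqrt t) / iterLog j t) ^ 2)
        = (∏ j ∈ Finset.Icc 1 N, (iterLog j (Real.sqrt t)) ^ 2)
          / (∏ j ∈ Finset.Icc 1 N, (iterLog j t) ^ 2) by
      rw [← Finset.prod_div_distrib]
      exact Finset.prod_congr rfl fun j _ => div_pow _ _ 2]
    field_simp
  refine ⟨part1, ?_⟩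
  -- Part 2
  have hev : ∀ᶠ t : ℝ in atTop, ∀ j ∈ Finset.Icc 1 N, 0 < iterLog j (Real.sqrt t) := by
    rw [Filter.eventually_all_finset]
    intro j _
    exact ((iterLog_tendsto j).comp sqrt_tendsto_atTop).eventually_gt_atTop 0
  have heq : ∀ᶠ t : ℝ in atTop,
      (fun t : ℝ => ∏ j ∈ Finset.Icc 1 N, (iterLog j (Real.sqrt t) / iterLog j t) ^ 2) t
        = (fun t : ℝ => t * h (Real.sqrt t) / h t) t := by
    filter_upwards [hev] with t ht
    exact (part1 t fun j hj1 hjN => ht j (Finset.mem_Icc.2 ⟨hj1, hjN⟩)).symm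
  have hprodlim : Tendsto
      (fun t : ℝ => ∏ j ∈ Finset.Icc 1 N, (iterLog j (Real.sqrt t) / iterLog j t) ^ 2)
      atTop (nhds (∏ j ∈ Finset.Icc 1 N, (if j = 1 then (1 : ℝ) / 2 else 1) ^ 2)) := by
    apply tendsto_finset_prod
    intro j hj
    rw [Finset.mem_Icc] at hj
    exact (ratio_tendsto j hj.1).pow 2
  have hprodval : (∏ j ∈ Finset.Icc 1 N, (if j = 1 then (1 : ℝ) / 2 else 1) ^ 2) = 1 / 4 := by
    rw [Finset.prod_eq_single 1]
    · norm_num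
    · intro b _ hb
      rw [if_neg hb]; norm_num
    · intro h1
      exact absurd (Finset.mem_Icc.2 ⟨le_rfl, hN⟩) h1
  rw [hprodval] at hprodlim
  have part2 : Tendsto (fun t : ℝ => t * h (Real.sqrt t) / h t) atTop (nhds (1 / 4)) :=
    hprodlim.congr' heq
  refine ⟨part2, ?_⟩
  -- Part 3
  have hcoe : Tendsto (fun t : ℝ => ((t * h (Real.sqrt t) / h t : ℝ) : EReal)) atTop
      (nhds (((1 : ℝ) / 4 : ℝ) : EReal)) :=
    (continuous_coe_real_ereal.tendsto _).comp part2
  rw [hcoe.limsup_eq]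
  exact EReal.coe_lt_top _
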